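/- arXiv:2506.22228 — 2 statements merged into one kernel-verified Lean document; each statement's English description precedes it below -/
import Mathlib

section
/- Fix an integer k ≥ 1 and a constant τ ∈ (0,1). For every Λ ≥ 1 there exists N such that for all n ≥ N the following holds: no global maximizer y* = (y*_1, …, y*_n) ∈ (ℝ²)^n of the t-SNE objective C for the discrete circle P_n with neighbor parameter k induces a map φ* : x_i ↦ y*_i that is bilipschitz with scaling factor S = n^τ and distortion factor L ≤ Λ. Equivalently, if for each n the optimal t-SNE embedding φ*_n of P_n is bilipschitz with scaling factor n^τ and (minimal) distortion factor L_n, then L_n → ∞ as n → ∞. -/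
open Real Finset

/-- The `i`-th point of the discrete circle `P_n ⊂ ℝ²`:
`x_i = (cos(2πi/n), sin(2πi/n))`. -/
noncomputable def circlePt (n : ℕ) (i : Fin n) : EuclideanSpace ℝ (Fin 2) :=
  WithLp.toLp 2 (fun j : Fin 2 => if j = 0 then Real.cos (2 * Real.pi * (i.val : ℝ) / n)
           else Real.sin (2 * Real.pi * (i.val : ℝ) / n))

/-- The normalizing constant `Z(y) = Σ_{k'≠ℓ'} (1 + ‖y_{k'} − y_{ℓ'}‖²)⁻¹`,
summed over all ordered pairs of distinct indices. -/
noncomputable def tsneZ {n : ℕ} (y : Fin n → EuclideanSpace ℝ (Fin 2)) : ℝ :=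
  ∑ p ∈ Finset.univ.filter (fun p : Fin n × Fin n => p.1 ≠ p.2),
    (1 + ‖y p.1 - y p.2‖ ^ 2)⁻¹

/-- The t-SNE objective `C(y) = Σ_{(i,j) ∈ 𝒩} log q_{ij}` with
`q_{ij} = (1 + ‖y_i − y_j‖²)⁻¹ / Z(y)` and
`𝒩 = {(i,j) : 1 ≤ (j − i) mod n ≤ k}` (so `|𝒩| = nk`). -/
noncomputable def tsneObj (n k : ℕ) (y : Fin n → EuclideanSpace ℝ (Fin 2)) : ℝ :=
  ∑ p ∈ Finset.univ.filter
      (fun p : Fin n × Fin n => 1 ≤ (p.2 - p.1).val ∧ (p.2 - p.1).val ≤ k),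
    Real.log ((1 + ‖y p.1 - y p.2‖ ^ 2)⁻¹ / tsneZ y)

/- ### Auxiliary lemmas -/

lemma sum_inv_sq (N : ℕ) :
    ∑ m ∈ Finset.range N, (1 + ((m : ℝ) + 1) ^ 2)⁻¹ ≤ 2 - 2 / ((N : ℝ) + 1) := by
  induction N with
  | zero => norm_num
  | succ N ih =>
    rw [Finset.sum_range_succ]
    have h1 : (0:ℝ) < (N:ℝ) + 1 := by positivity
    have h2 : (0:ℝ) < (N:ℝ) + 2 := by positivity
    have key : (1 + ((N : ℝ) + 1) ^ 2)⁻¹ ≤ 2 / ((N : ℝ) + 1) - 2 / ((N : ℝ) + 2) := by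
      rw [div_sub_div _ _ (ne_of_gt h1) (ne_of_gt h2), inv_eq_one_div,
        div_le_div_iff₀ (by positivity) (by positivity)]
      ring_nf
      nlinarith
    push_cast
    have h3 : ((N:ℝ) + 1 + 1) = (N:ℝ) + 2 := by ring
    rw [h3]
    linarith

lemma sum_inv_sq' (N : ℕ) :
    ∑ m ∈ Finset.range N, (1 + ((m + 1 : ℕ) : ℝ) ^ 2)⁻¹ ≤ 2 := by
  have h := sum_inv_sq N
  have e : ∀ m ∈ Finset.range N, (1 + ((m + 1 : ℕ) : ℝ) ^ 2)⁻¹ = (1 + ((m : ℝ) + 1) ^ 2)⁻¹ := by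
    intro m _; push_cast; ring_nf
  rw [Finset.sum_congr rfl e]
  have : (0:ℝ) < 2 / ((N : ℝ) + 1) := by positivity
  linarith

lemma key_identity (A B : ℝ) :
    Real.sqrt ((Real.cos A - Real.cos B) ^ 2 + (Real.sin A - Real.sin B) ^ 2)
      = 2 * |Real.sin ((A - B) / 2)| := by
  have hc := Real.cos_two_mul ((A - B) / 2)
  have hs := Real.sin_sq_add_cos_sq ((A - B) / 2)
  have hAB : 2 * ((A - B) / 2) = A - B := by ring
  rw [hAB] at hc
  have hcs := Real.cos_sub A B
  have hsA := Real.sin_sq_add_cos_sq A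
  have hsB := Real.sin_sq_add_cos_sq B
  have h : (Real.cos A - Real.cos B) ^ 2 + (Real.sin A - Real.sin B) ^ 2
      = (2 * Real.sin ((A - B) / 2)) ^ 2 := by nlinarith
  rw [h, Real.sqrt_sq_eq_abs, abs_mul]
  norm_num

lemma circle_norm (n : ℕ) (hn : 0 < n) (i j : Fin n) :
    ‖circlePt n i - circlePt n j‖
      = 2 * |Real.sin (π * ((i.val : ℝ) - (j.val : ℝ)) / n)| := by
  have hn' : (n : ℝ) ≠ 0 := Nat.cast_ne_zero.mpr hn.ne'
  rw [EuclideanSpace.norm_eq]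
  rw [Fin.sum_univ_two]
  have h0 : (circlePt n i - circlePt n j) 0
      = Real.cos (2 * π * (i.val : ℝ) / n) - Real.cos (2 * π * (j.val : ℝ) / n) := by
    simp [circlePt]
  have h1 : (circlePt n i - circlePt n j) 1
      = Real.sin (2 * π * (i.val : ℝ) / n) - Real.sin (2 * π * (j.val : ℝ) / n) := by
    simp [circlePt]
  rw [h0, h1, Real.norm_eq_abs, Real.norm_eq_abs, sq_abs, sq_abs, key_identity]
  congr 2
  field_simp

lemma fin_sub_val {n : ℕ} (i j : Fin n) :
    (j - i).val = if i.val ≤ j.val then j.val - i.val else j.val + n - i.val := by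
  have hi := i.isLt
  have hj := j.isLt
  rw [Fin.sub_def]
  simp only []
  rcases le_or_gt i.val j.val with h | h
  · rw [if_pos h]
    have e : n - i.val + j.val = (j.val - i.val) + n := by omega
    rw [e, Nat.add_mod_right, Nat.mod_eq_of_lt (by omega)]
  · rw [if_neg (by omega)]
    rw [Nat.mod_eq_of_lt (by omega)]
    omega

lemma chord_eq (n : ℕ) (hn : 0 < n) (i j : Fin n) :
    ‖circlePt n i - circlePt n j‖ = 2 * Real.sin (π * (((j - i).val : ℕ) : ℝ) / n) := by
  have hn' : (0:ℝ) < (n : ℝ) := by exact_mod_cast hn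
  set d := ((j - i).val : ℕ) with hd
  have hdn : d < n := (j - i).isLt
  have hnonneg : 0 ≤ Real.sin (π * (d : ℝ) / n) := by
    apply Real.sin_nonneg_of_nonneg_of_le_pi
    · positivity
    · rw [div_le_iff₀ hn']
      have : (d : ℝ) ≤ (n : ℝ) := by exact_mod_cast hdn.le
      nlinarith [Real.pi_pos]
  rw [circle_norm n hn i j]
  congr 1
  rw [fin_sub_val] at hd
  rcases le_or_gt i.val j.val with h | h
  · rw [if_pos h] at hd
    have e : (i.val : ℝ) - (j.val : ℝ) = -(d : ℝ) := by
      rw [hd]; push_cast [h]; ring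
    rw [e]
    rw [show π * -(d:ℝ) / n = -(π * (d:ℝ) / n) by ring, Real.sin_neg, abs_neg,
      abs_of_nonneg hnonneg]
  · rw [if_neg (by omega)] at hd
    have e : (i.val : ℝ) - (j.val : ℝ) = (n : ℝ) - (d : ℝ) := by
      rw [hd]
      have h2 : (↑(j.val + n - i.val) : ℝ) = (j.val : ℝ) + n - i.val := by
        have : i.val ≤ j.val + n := by omega
        push_cast [this]; ring
      rw [h2]; ring
    rw [e, show π * ((n:ℝ) - (d:ℝ)) / n = π - π * (d:ℝ) / n by field_simp,
      Real.sin_pi_sub, abs_of_nonneg hnonneg]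

lemma chord_le (n : ℕ) (hn : 0 < n) (i j : Fin n) :
    ‖circlePt n i - circlePt n j‖ ≤ 2 * π * (((j - i).val : ℕ) : ℝ) / n := by
  have hn' : (0:ℝ) < (n : ℝ) := by exact_mod_cast hn
  rw [chord_eq n hn i j]
  have h := Real.sin_le (x := π * (((j - i).val : ℕ) : ℝ) / n) (by positivity)
  calc 2 * Real.sin (π * (((j - i).val : ℕ) : ℝ) / n)
      ≤ 2 * (π * (((j - i).val : ℕ) : ℝ) / n) := by linarith
    _ = 2 * π * (((j - i).val : ℕ) : ℝ) / n := by ring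

lemma chord_ge (n : ℕ) (hn : 0 < n) (i j : Fin n) :
    ((min (j - i).val (n - (j - i).val) : ℕ) : ℝ) / n ≤ ‖circlePt n i - circlePt n j‖ := by
  have hn' : (0:ℝ) < (n : ℝ) := by exact_mod_cast hn
  have hdn : (j - i).val < n := (j - i).isLt
  obtain ⟨m, hm⟩ : ∃ m : ℕ, m = min (j - i).val (n - (j - i).val) := ⟨_, rfl⟩
  have hm2 : 2 * m ≤ n := by omega
  have hsin : Real.sin (π * (((j - i).val : ℕ) : ℝ) / n) = Real.sin (π * (m : ℝ) / n) := by
    rcases le_total (j - i).val (n - (j - i).val) with h | h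
    · rw [hm, min_eq_left h]
    · rw [hm, min_eq_right h]
      have e : π * (((n - (j - i).val : ℕ)) : ℝ) / n = π - π * (((j - i).val : ℕ) : ℝ) / n := by
        push_cast [hdn.le]
        field_simp
      rw [e, Real.sin_pi_sub]
  have hx0 : (0:ℝ) ≤ π * (m : ℝ) / n := by positivity
  have hx1 : π * (m : ℝ) / n ≤ π / 2 := by
    rw [div_le_div_iff₀ hn' two_pos]
    have : (2 * m : ℝ) ≤ (n : ℝ) := by exact_mod_cast hm2
    nlinarith [Real.pi_pos]
  have hlow := Real.mul_le_sin hx0 hx1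
  have hcan : 2 / π * (π * (m : ℝ) / n) = 2 * (m : ℝ) / n := by
    field_simp
  rw [hcan] at hlow
  rw [chord_eq n hn i j, hsin, ← hm]
  have hmn : (0:ℝ) ≤ (m : ℝ) / n := by positivity
  have h4 : 2 * (m : ℝ) / n = 2 * ((m:ℝ)/n) := by ring
  rw [h4] at hlow
  linarith

/-- Auxiliary summand for bounding the normalizing constant of the competitor. -/
noncomputable def Gfun (n m : ℕ) : ℝ :=
  if m ≠ 0 then (1 + ((m:ℕ) : ℝ) ^ 2)⁻¹ + (1 + (((n - m : ℕ)) : ℝ) ^ 2)⁻¹ else 0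

lemma sum_g_le {n : ℕ} (hn : 1 ≤ n) : ∑ m ∈ Finset.range n, Gfun n m ≤ 4 := by
  simp only [Gfun]
  have hsplit : ∀ m ∈ Finset.range n,
      (if m ≠ 0 then (1 + ((m:ℕ) : ℝ) ^ 2)⁻¹ + (1 + (((n - m : ℕ)) : ℝ) ^ 2)⁻¹ else 0)
      = (if m ≠ 0 then (1 + ((m:ℕ) : ℝ) ^ 2)⁻¹ else 0)
        + (if m ≠ 0 then (1 + (((n - m : ℕ)) : ℝ) ^ 2)⁻¹ else 0) := by
    intro m _; split <;> simp
  rw [Finset.sum_congr rfl hsplit, Finset.sum_add_distrib]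
  obtain ⟨N, rfl⟩ : ∃ N, n = N + 1 := ⟨n - 1, by omega⟩
  have h1 : ∑ m ∈ Finset.range (N + 1), (if m ≠ 0 then (1 + ((m:ℕ) : ℝ) ^ 2)⁻¹ else 0) ≤ 2 := by
    rw [Finset.sum_range_succ']
    have e1 : ∀ i ∈ Finset.range N,
        (if i + 1 ≠ 0 then (1 + (((i + 1 : ℕ)) : ℝ) ^ 2)⁻¹ else 0)
        = (1 + (((i + 1 : ℕ)) : ℝ) ^ 2)⁻¹ := fun i _ => if_pos (Nat.succ_ne_zero i)
    rw [Finset.sum_congr rfl e1, if_neg (by simp)]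
    have := sum_inv_sq' N
    linarith
  have h2 : ∑ m ∈ Finset.range (N + 1),
      (if m ≠ 0 then (1 + (((N + 1 - m : ℕ)) : ℝ) ^ 2)⁻¹ else 0) ≤ 2 := by
    rw [Finset.sum_range_succ']
    have e : ∀ i ∈ Finset.range N,
        (if i + 1 ≠ 0 then (1 + (((N + 1 - (i + 1) : ℕ)) : ℝ) ^ 2)⁻¹ else 0)
        = (fun j : ℕ => (1 + (((j + 1 : ℕ)) : ℝ) ^ 2)⁻¹) (N - 1 - i) := by
      intro i hi
      rw [if_pos (by omega)]
      simp only [Finset.mem_range] at hi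
      have e2 : N + 1 - (i + 1) = (N - 1 - i) + 1 := by omega
      rw [e2]
    rw [Finset.sum_congr rfl e,
      Finset.sum_range_reflect (fun j : ℕ => (1 + (((j + 1 : ℕ)) : ℝ) ^ 2)⁻¹) N,
      if_neg (by simp)]
    have := sum_inv_sq' N
    linarith
  linarith

lemma sum_shear {n : ℕ} [NeZero n] (f : Fin n × Fin n → ℝ) :
    ∑ p : Fin n × Fin n, f p = ∑ q : Fin n × Fin n, f (q.1, q.1 + q.2) :=
  (Equiv.sum_comp ⟨fun q : Fin n × Fin n => (q.1, q.1 + q.2),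
    fun p => (p.1, p.2 - p.1), fun q => by simp, fun p => by simp⟩ f).symm

lemma Zprime_le {n : ℕ} (hn : 2 ≤ n) :
    tsneZ (fun i => (n : ℝ) • circlePt n i) ≤ 4 * n := by
  haveI : NeZero n := ⟨by omega⟩
  have hn0 : 0 < n := by omega
  have hn' : (0:ℝ) < (n : ℝ) := by exact_mod_cast hn0
  rw [tsneZ, Finset.sum_filter]
  rw [sum_shear (fun p : Fin n × Fin n =>
    if p.1 ≠ p.2 then (1 + ‖(n : ℝ) • circlePt n p.1 - (n : ℝ) • circlePt n p.2‖ ^ 2)⁻¹ else 0)]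
  have hterm : ∀ q : Fin n × Fin n,
      (if q.1 ≠ q.1 + q.2 then
        (1 + ‖(n : ℝ) • circlePt n q.1 - (n : ℝ) • circlePt n (q.1 + q.2)‖ ^ 2)⁻¹ else 0)
      ≤ Gfun n q.2.val := by
    intro ⟨i, c⟩
    by_cases hc : c = 0
    · subst hc
      simp [Gfun]
    · have hne : i ≠ i + c := by
        intro h
        exact hc (by simpa using (congrArg (· - i) h).symm)
      have hcv : c.val ≠ 0 := fun h => hc (Fin.ext (by simp [h]))
      rw [if_pos hne, Gfun, if_pos hcv]
      have hdist : ((min c.val (n - c.val) : ℕ) : ℝ)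
          ≤ ‖(n : ℝ) • circlePt n i - (n : ℝ) • circlePt n (i + c)‖ := by
        rw [← smul_sub, norm_smul, Real.norm_eq_abs, abs_of_nonneg hn'.le]
        have h1 := chord_ge n hn0 i (i + c)
        rw [add_sub_cancel_left] at h1
        calc ((min c.val (n - c.val) : ℕ) : ℝ)
            = (n : ℝ) * (((min c.val (n - c.val) : ℕ) : ℝ) / n) := by field_simp
          _ ≤ (n : ℝ) * ‖circlePt n i - circlePt n (i + c)‖ := by
              apply mul_le_mul_of_nonneg_left h1 hn'.le
      have hmin : (1 + ‖(n : ℝ) • circlePt n i - (n : ℝ) • circlePt n (i + c)‖ ^ 2)⁻¹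
          ≤ (1 + ((min c.val (n - c.val) : ℕ) : ℝ) ^ 2)⁻¹ := by
        apply inv_anti₀ (by positivity)
        have h0 : (0:ℝ) ≤ ((min c.val (n - c.val) : ℕ) : ℝ) := by positivity
        nlinarith [hdist]
      refine hmin.trans ?_
      rcases le_total c.val (n - c.val) with h | h
      · rw [min_eq_left h]
        have : (0:ℝ) < (1 + (((n - c.val : ℕ)) : ℝ) ^ 2)⁻¹ := by positivity
        linarith
      · rw [min_eq_right h]
        have : (0:ℝ) < (1 + ((c.val : ℕ) : ℝ) ^ 2)⁻¹ := by positivity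
        linarith
  calc ∑ q : Fin n × Fin n, (if q.1 ≠ q.1 + q.2 then
          (1 + ‖(n : ℝ) • circlePt n q.1 - (n : ℝ) • circlePt n (q.1 + q.2)‖ ^ 2)⁻¹ else 0)
      ≤ ∑ q : Fin n × Fin n, Gfun n q.2.val := Finset.sum_le_sum (fun q _ => hterm q)
    _ = ∑ i : Fin n, ∑ c : Fin n, Gfun n c.val := by rw [Fintype.sum_prod_type]
    _ = ∑ i : Fin n, ∑ m ∈ Finset.range n, Gfun n m := by
        rw [Fin.sum_univ_eq_sum_range (Gfun n) n]
    _ ≤ ∑ i : Fin n, (4:ℝ) := Finset.sum_le_sum (fun i _ => sum_g_le (by omega))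
    _ = 4 * n := by simp [mul_comm]

lemma tsneZ_pos {n : ℕ} (hn : 2 ≤ n) (y : Fin n → EuclideanSpace ℝ (Fin 2)) :
    0 < tsneZ y := by
  rw [tsneZ]
  apply Finset.sum_pos
  · intro p _
    positivity
  · refine ⟨((⟨0, by omega⟩ : Fin n), (⟨1, by omega⟩ : Fin n)), ?_⟩
    simp only [Finset.mem_filter, Finset.mem_univ, true_and]
    intro h
    exact absurd (congrArg Fin.val h) (by simp)
set_option maxHeartbeats 2000000 in
/-- Fix an integer `k ≥ 1` and `τ ∈ (0,1)`. For every `Λ ≥ 1` there exists `N`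
such that for all `n ≥ N` (with `k < n/2`): no global maximizer `y*` of the t-SNE objective
for the discrete circle `P_n` with neighbor parameter `k` induces a map `x_i ↦ y*_i` that is
bilipschitz with scaling factor `S = n^τ` and distortion factor `L ≤ Λ`. -/
theorem stmt0 (k : ℕ) (hk : 1 ≤ k) (τ : ℝ) (hτ0 : 0 < τ) (hτ1 : τ < 1)
    (Λ : ℝ) (hΛ : 1 ≤ Λ) :
    ∃ N : ℕ, ∀ n : ℕ, N ≤ n → 2 * k < n →
      ∀ y : Fin n → EuclideanSpace ℝ (Fin 2),
        (∀ y' : Fin n → EuclideanSpace ℝ (Fin 2), tsneObj n k y' ≤ tsneObj n k y) →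
        ¬ ∃ L : ℝ, 1 ≤ L ∧ L ≤ Λ ∧
            ∀ i j : Fin n, i ≠ j →
              (n : ℝ) ^ τ * ‖circlePt n i - circlePt n j‖ ≤ ‖y i - y j‖ ∧
              ‖y i - y j‖ ≤ (n : ℝ) ^ τ * L * ‖circlePt n i - circlePt n j‖ := by
  have hΛ0 : (0:ℝ) < Λ := by linarith
  have htend : Filter.Tendsto (fun n : ℕ => ((n:ℝ)) ^ (1 - τ)) Filter.atTop Filter.atTop :=
    (tendsto_rpow_atTop (by linarith)).comp tendsto_natCast_atTop_atTop
  obtain ⟨N, hN⟩ := Filter.eventually_atTop.mp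
    (htend.eventually_ge_atTop (8 * Λ * ((8 * (1 + 64 * (k:ℝ) ^ 2)) + 2)))
  refine ⟨N, ?_⟩
  rintro n hnN hkn y hopt ⟨L, hL1, hLΛ, hbil⟩
  have hn3 : 3 ≤ n := by omega
  haveI : NeZero n := ⟨by omega⟩
  have hn' : (0:ℝ) < n := by exact_mod_cast (by omega : 0 < n)
  have hn1 : (1:ℝ) ≤ n := by exact_mod_cast (by omega : 1 ≤ n)
  have hrp : (0:ℝ) < (n:ℝ) ^ τ := Real.rpow_pos_of_pos hn' τ
  have hpow := hN n hnN
  obtain ⟨D, hDdef⟩ : ∃ D : ℕ, D = ⌊(n:ℝ) ^ (1 - τ) / (8 * Λ)⌋₊ := ⟨_, rfl⟩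
  have hDle : (D:ℝ) ≤ (n:ℝ) ^ (1-τ) / (8*Λ) := by
    rw [hDdef]; exact Nat.floor_le (by positivity)
  have hDge : 8 * (1 + 64 * (k:ℝ) ^ 2) + 1 ≤ (D:ℝ) := by
    have h1 : ((8 * (1 + 64 * k ^ 2) + 1 : ℕ) : ℝ) ≤ (D:ℝ) := by
      apply Nat.cast_le.mpr
      rw [hDdef]
      apply Nat.le_floor
      rw [le_div_iff₀ (by positivity)]
      push_cast
      nlinarith
    calc 8 * (1 + 64 * (k:ℝ) ^ 2) + 1
        = ((8 * (1 + 64 * k ^ 2) + 1 : ℕ) : ℝ) := by push_cast; ring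
      _ ≤ (D:ℝ) := h1
  have hDlt : D < n := by
    have h1 : (n:ℝ) ^ (1-τ) ≤ (n:ℝ) := by
      calc (n:ℝ) ^ (1-τ) ≤ (n:ℝ) ^ (1:ℝ) :=
            Real.rpow_le_rpow_of_exponent_le hn1 (by linarith)
        _ = (n:ℝ) := Real.rpow_one _
    have h2 : (D:ℝ) < (n:ℝ) := by
      calc (D:ℝ) ≤ (n:ℝ) ^ (1-τ) / (8*Λ) := hDle
        _ ≤ (n:ℝ) / (8*Λ) := by gcongr
        _ < (n:ℝ) := by
            rw [div_lt_iff₀ (by positivity)]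
            nlinarith
    exact_mod_cast h2
  have hD1 : 1 ≤ D := by
    have : (0:ℝ) < (D:ℝ) := by nlinarith
    exact_mod_cast Nat.one_le_cast.mpr (by exact_mod_cast this)
  have hND : (0:ℝ) < (n:ℝ) * (D:ℝ) / 2 := by
    have hD1' : (1:ℝ) ≤ (D:ℝ) := by exact_mod_cast hD1
    nlinarith
  have h8D : 8 * Λ * (D:ℝ) ≤ (n:ℝ) / (n:ℝ)^τ := by
    have hsub : (n:ℝ)^((1:ℝ)-τ) = (n:ℝ)/(n:ℝ)^τ := by
      rw [Real.rpow_sub hn', Real.rpow_one]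
    rw [le_div_iff₀ (by positivity)] at hDle
    rw [← hsub]
    linarith
  -- pairs at circular distance ≤ D are embedded 1-close
  have hclose : ∀ i c : Fin n, 1 ≤ c.val → c.val ≤ D → ‖y i - y (i + c)‖ ≤ 1 := by
    intro i c hc1 hcD
    have hne : i ≠ i + c := by
      intro h
      have h0 : c = 0 := add_eq_left.mp h.symm
      rw [h0] at hc1
      simp at hc1
    have hb := (hbil i (i + c) hne).2
    have hch := chord_le n (by omega) i (i + c)
    rw [add_sub_cancel_left] at hch
    have hcvD : ((c.val:ℕ):ℝ) ≤ (D:ℝ) := by exact_mod_cast hcD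
    have hcv0 : (0:ℝ) ≤ ((c.val:ℕ):ℝ) := by positivity
    have step1 : ‖y i - y (i + c)‖ ≤ (n:ℝ)^τ * Λ * ‖circlePt n i - circlePt n (i + c)‖ := by
      refine hb.trans ?_
      apply mul_le_mul_of_nonneg_right _ (norm_nonneg _)
      apply mul_le_mul_of_nonneg_left hLΛ hrp.le
    have step2 : (n:ℝ)^τ * Λ * ‖circlePt n i - circlePt n (i + c)‖
        ≤ (n:ℝ)^τ * Λ * (8 * (D:ℝ) / n) := by
      apply mul_le_mul_of_nonneg_left _ (by positivity)
      refine hch.trans ?_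
      rw [div_le_div_iff₀ hn' hn']
      have hπ : 2 * π * ((c.val:ℕ):ℝ) ≤ 8 * (D:ℝ) := by
        nlinarith [Real.pi_le_four]
      nlinarith
    have step3 : (n:ℝ)^τ * Λ * (8 * (D:ℝ) / n) ≤ 1 := by
      calc (n:ℝ)^τ * Λ * (8 * (D:ℝ) / n) = (8*Λ*(D:ℝ)) * ((n:ℝ)^τ/n) := by ring
        _ ≤ ((n:ℝ)/(n:ℝ)^τ) * ((n:ℝ)^τ/n) := by
            apply mul_le_mul_of_nonneg_right h8D (by positivity)
        _ = 1 := by field_simp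
    linarith
  -- lower bound for the normalizing constant of the optimum
  have hZlow : (n:ℝ) * (D:ℝ) / 2 ≤ tsneZ y := by
    have e1 : tsneZ y = ∑ q : Fin n × Fin n,
        (if q.1 ≠ q.1 + q.2 then (1 + ‖y q.1 - y (q.1 + q.2)‖ ^ 2)⁻¹ else 0) := by
      rw [tsneZ, Finset.sum_filter,
        sum_shear (fun p : Fin n × Fin n =>
          if p.1 ≠ p.2 then (1 + ‖y p.1 - y p.2‖ ^ 2)⁻¹ else 0)]
    rw [e1]
    have e2 : ∑ q : Fin n × Fin n, (if 1 ≤ q.2.val ∧ q.2.val ≤ D then (1:ℝ)/2 else 0)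
        = (n:ℝ) * (D:ℝ) / 2 := by
      rw [Fintype.sum_prod_type]
      have inner : ∀ i : Fin n,
          ∑ c : Fin n, (if 1 ≤ c.val ∧ c.val ≤ D then (1:ℝ)/2 else 0) = (D:ℝ)/2 := by
        intro i
        rw [Fin.sum_univ_eq_sum_range (fun m => if 1 ≤ m ∧ m ≤ D then (1:ℝ)/2 else 0) n,
          ← Finset.sum_filter]
        have hfil : (Finset.range n).filter (fun m => 1 ≤ m ∧ m ≤ D) = Finset.Icc 1 D := by
          ext m
          simp only [Finset.mem_filter, Finset.mem_range, Finset.mem_Icc]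
          omega
        rw [hfil, Finset.sum_const, Nat.card_Icc, nsmul_eq_mul]
        push_cast [hD1]
        ring
      rw [Finset.sum_congr rfl (fun i _ => inner i), Finset.sum_const, Finset.card_univ,
        Fintype.card_fin, nsmul_eq_mul]
      ring
    rw [← e2]
    apply Finset.sum_le_sum
    intro q _
    by_cases hcond : 1 ≤ q.2.val ∧ q.2.val ≤ D
    · rw [if_pos hcond]
      have hcv : q.2.val ≠ 0 := by omega
      have hne : q.1 ≠ q.1 + q.2 := by
        intro h
        have h0 : q.2 = 0 := add_eq_left.mp h.symm
        exact hcv (by rw [h0]; rfl)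
      rw [if_pos hne]
      have hdist := hclose q.1 q.2 hcond.1 hcond.2
      have hd0 := norm_nonneg (y q.1 - y (q.1 + q.2))
      have h2 : 1 + ‖y q.1 - y (q.1 + q.2)‖ ^ 2 ≤ 2 := by nlinarith
      have h3 := inv_anti₀
        (by positivity : (0:ℝ) < 1 + ‖y q.1 - y (q.1 + q.2)‖ ^ 2) h2
      calc (1:ℝ)/2 = (2:ℝ)⁻¹ := by norm_num
        _ ≤ (1 + ‖y q.1 - y (q.1 + q.2)‖ ^ 2)⁻¹ := h3
    · rw [if_neg hcond]
      split
      · positivity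
      · exact le_refl 0
  have hZpos : 0 < tsneZ y := lt_of_lt_of_le hND hZlow
  -- the neighbour set is nonempty
  have hM1 : 1 ≤ ((Finset.univ.filter
      (fun p : Fin n × Fin n => 1 ≤ (p.2 - p.1).val ∧ (p.2 - p.1).val ≤ k)).card) := by
    apply Finset.card_pos.mpr
    refine ⟨((⟨0, by omega⟩ : Fin n), (⟨1, by omega⟩ : Fin n)), ?_⟩
    rw [Finset.mem_filter]
    refine ⟨Finset.mem_univ _, ?_⟩
    rw [fin_sub_val]
    simp [hk]
  have hMpos : (0:ℝ) < (((Finset.univ.filter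
      (fun p : Fin n × Fin n => 1 ≤ (p.2 - p.1).val ∧ (p.2 - p.1).val ≤ k)).card) : ℝ) := by
    exact_mod_cast hM1
  -- upper bound for the optimal objective
  have hup : tsneObj n k y ≤ (((Finset.univ.filter
      (fun p : Fin n × Fin n => 1 ≤ (p.2 - p.1).val ∧ (p.2 - p.1).val ≤ k)).card) : ℝ)
        * (-(Real.log ((n:ℝ) * (D:ℝ) / 2))) := by
    rw [tsneObj]
    have hbound : ∀ p ∈ Finset.univ.filter
        (fun p : Fin n × Fin n => 1 ≤ (p.2 - p.1).val ∧ (p.2 - p.1).val ≤ k),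
        Real.log ((1 + ‖y p.1 - y p.2‖ ^ 2)⁻¹ / tsneZ y)
          ≤ -(Real.log ((n:ℝ) * (D:ℝ) / 2)) := by
      intro p _
      have hf1 : (1 + ‖y p.1 - y p.2‖ ^ 2)⁻¹ ≤ 1 := by
        rw [inv_le_one_iff₀]
        right
        nlinarith [norm_nonneg (y p.1 - y p.2)]
      have hfp : (0:ℝ) < (1 + ‖y p.1 - y p.2‖ ^ 2)⁻¹ := by positivity
      have hq1 : (1 + ‖y p.1 - y p.2‖ ^ 2)⁻¹ / tsneZ y ≤ 1 / tsneZ y :=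
        div_le_div_of_nonneg_right hf1 hZpos.le
      have hq2 : 1 / tsneZ y ≤ 1 / ((n:ℝ) * (D:ℝ) / 2) :=
        one_div_le_one_div_of_le hND hZlow
      have hx : (0:ℝ) < (1 + ‖y p.1 - y p.2‖ ^ 2)⁻¹ / tsneZ y := div_pos hfp hZpos
      calc Real.log ((1 + ‖y p.1 - y p.2‖ ^ 2)⁻¹ / tsneZ y)
          ≤ Real.log (1 / ((n:ℝ) * (D:ℝ) / 2)) := by
            apply (Real.log_le_log_iff hx (one_div_pos.mpr hND)).mpr
            linarith
        _ = -(Real.log ((n:ℝ) * (D:ℝ) / 2)) := by rw [one_div, Real.log_inv]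
    refine le_trans (Finset.sum_le_card_nsmul _ _ _ hbound) ?_
    rw [nsmul_eq_mul]
  -- lower bound for the competitor objective
  have hZ2pos : 0 < tsneZ (fun i => (n : ℝ) • circlePt n i) :=
    tsneZ_pos (by omega) _
  have hZ2le : tsneZ (fun i => (n : ℝ) • circlePt n i) ≤ 4 * n := Zprime_le (by omega)
  have hlo : (((Finset.univ.filter
      (fun p : Fin n × Fin n => 1 ≤ (p.2 - p.1).val ∧ (p.2 - p.1).val ≤ k)).card) : ℝ)
        * (-(Real.log (1 + 64*(k:ℝ)^2)) - Real.log (4*(n:ℝ)))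
      ≤ tsneObj n k (fun i => (n : ℝ) • circlePt n i) := by
    rw [tsneObj]
    have hbound : ∀ p ∈ Finset.univ.filter
        (fun p : Fin n × Fin n => 1 ≤ (p.2 - p.1).val ∧ (p.2 - p.1).val ≤ k),
        -(Real.log (1 + 64*(k:ℝ)^2)) - Real.log (4*(n:ℝ))
          ≤ Real.log ((1 + ‖(n : ℝ) • circlePt n p.1 - (n : ℝ) • circlePt n p.2‖ ^ 2)⁻¹
              / tsneZ (fun i => (n : ℝ) • circlePt n i)) := by
      intro p hp
      rw [Finset.mem_filter] at hp
      obtain ⟨-, hd1, hdk⟩ := hp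
      have hdist : ‖(n : ℝ) • circlePt n p.1 - (n : ℝ) • circlePt n p.2‖ ≤ 8 * (k:ℝ) := by
        rw [← smul_sub, norm_smul, Real.norm_eq_abs, abs_of_nonneg hn'.le]
        have hch := chord_le n (by omega) p.1 p.2
        have hdk' : (((p.2 - p.1).val : ℕ) : ℝ) ≤ (k:ℝ) := by exact_mod_cast hdk
        have hdnn : (0:ℝ) ≤ (((p.2 - p.1).val : ℕ) : ℝ) := by positivity
        calc (n:ℝ) * ‖circlePt n p.1 - circlePt n p.2‖
            ≤ (n:ℝ) * (2 * π * (((p.2 - p.1).val : ℕ) : ℝ) / n) := by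
              apply mul_le_mul_of_nonneg_left hch hn'.le
          _ = 2 * π * (((p.2 - p.1).val : ℕ) : ℝ) := by field_simp
          _ ≤ 8 * (k:ℝ) := by nlinarith [Real.pi_le_four]
      have hd0 := norm_nonneg ((n : ℝ) • circlePt n p.1 - (n : ℝ) • circlePt n p.2)
      rw [Real.log_div (by positivity) (ne_of_gt hZ2pos), Real.log_inv]
      have l1 : Real.log (1 + ‖(n : ℝ) • circlePt n p.1 - (n : ℝ) • circlePt n p.2‖ ^ 2)
          ≤ Real.log (1 + 64*(k:ℝ)^2) := by
        apply (Real.log_le_log_iff (by positivity) (by positivity)).mpr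
        nlinarith
      have l2 : Real.log (tsneZ (fun i => (n : ℝ) • circlePt n i)) ≤ Real.log (4*(n:ℝ)) := by
        apply (Real.log_le_log_iff hZ2pos (by positivity)).mpr
        exact_mod_cast hZ2le
      linarith
    refine le_trans ?_ (Finset.card_nsmul_le_sum _ _ _ hbound)
    rw [nsmul_eq_mul]
  -- combine
  have hchain := hlo.trans ((hopt (fun i => (n : ℝ) • circlePt n i)).trans hup)
  have hAB : -(Real.log (1 + 64*(k:ℝ)^2)) - Real.log (4*(n:ℝ))
      ≤ -(Real.log ((n:ℝ) * (D:ℝ) / 2)) :=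
    (mul_le_mul_iff_right₀ hMpos).mp hchain
  have hlogs : Real.log ((n:ℝ) * (D:ℝ) / 2) ≤ Real.log ((1 + 64*(k:ℝ)^2) * (4*(n:ℝ))) := by
    rw [Real.log_mul (by positivity) (by positivity)]
    linarith
  have hfin : (n:ℝ) * (D:ℝ) / 2 ≤ (1 + 64*(k:ℝ)^2) * (4*(n:ℝ)) :=
    (Real.log_le_log_iff hND (by positivity)).mp hlogs
  nlinarith
end

section
/- For every a > 0 there exist constants c_1, C_1 > 0 and N such that for all n ≥ N and all S ≥ a·n, one has c_1·n³/S² ≤ Σ_{k≠ℓ} 1/(1+S²‖x_k−x_ℓ‖²) ≤ C_1·n³/S², where the sum ranges over all ordered pairs of distinct indices k, ℓ ∈ {1,…,n} and x_i are the points of the discrete circle P_n. -/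
open Real Finset

lemma aux_sum_inv_sq (M : ℕ) :
    ∑ m ∈ Finset.range M, (((m : ℝ) + 1) ^ 2)⁻¹ ≤ 2 - 2 * ((M : ℝ) + 1)⁻¹ := by
  induction M with
  | zero => norm_num
  | succ M ih =>
    rw [Finset.sum_range_succ]
    have h1 : (0:ℝ) < (M:ℝ) + 1 := by positivity
    have h2 : (0:ℝ) < (M:ℝ) + 2 := by positivity
    have key : (((M:ℝ) + 1) ^ 2)⁻¹ ≤ 2 * ((M:ℝ) + 1)⁻¹ - 2 * ((M:ℝ) + 2)⁻¹ := by
      have e : 2 * ((M:ℝ) + 1)⁻¹ - 2 * ((M:ℝ) + 2)⁻¹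
          = ((((M:ℝ) + 1) * ((M:ℝ) + 2)) / 2)⁻¹ := by
        field_simp; ring
      rw [e]
      apply inv_anti₀ (by positivity)
      nlinarith
    push_cast
    have e2 : ((M:ℝ) + 1 + 1)⁻¹ = ((M:ℝ) + 2)⁻¹ := by rw [show ((M:ℝ) + 1 + 1) = (M:ℝ) + 2 by ring]
    linarith [key, ih]

lemma aux_sin_sq_shift (x : ℝ) {n : ℝ} (hn : n ≠ 0) :
    Real.sin (π * (x + n) / n) ^ 2 = Real.sin (π * x / n) ^ 2 := by
  have h : π * (x + n) / n = π * x / n + π := by field_simp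
  rw [h, Real.sin_add_pi]; ring

lemma aux_trig (x y : ℝ) :
    (Real.cos x - Real.cos y) ^ 2 + (Real.sin x - Real.sin y) ^ 2
      = 4 * Real.sin ((x - y) / 2) ^ 2 := by
  have hc : Real.cos (x - y) = Real.cos x * Real.cos y + Real.sin x * Real.sin y :=
    Real.cos_sub x y
  have hu : Real.cos (x - y) = 1 - 2 * Real.sin ((x - y) / 2) ^ 2 := by
    set u := (x - y) / 2 with hudef
    rw [show x - y = 2 * u by rw [hudef]; ring, Real.cos_two_mul]
    linear_combination 2 * (Real.sin_sq_add_cos_sq u)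
  linear_combination (Real.sin_sq_add_cos_sq x) + (Real.sin_sq_add_cos_sq y)
    + 2 * hc - 2 * hu

lemma aux_norm_circlePt (n : ℕ) [NeZero n] (k ℓ : Fin n) :
    ‖circlePt n k - circlePt n ℓ‖ ^ 2
      = 4 * Real.sin (π * (((k - ℓ : Fin n).val : ℝ)) / n) ^ 2 := by
  have hn : (n:ℝ) ≠ 0 := Nat.cast_ne_zero.mpr (NeZero.ne n)
  set A := 2 * π * (k.val : ℝ) / n with hA
  set B := 2 * π * (ℓ.val : ℝ) / n with hB
  have hnorm : ‖circlePt n k - circlePt n ℓ‖ ^ 2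
      = (Real.cos A - Real.cos B) ^ 2 + (Real.sin A - Real.sin B) ^ 2 := by
    rw [EuclideanSpace.norm_eq, Real.sq_sqrt (by positivity)]
    rw [Fin.sum_univ_two]
    simp [circlePt, Real.norm_eq_abs, sq_abs, A, B]
  have harg : (A - B) / 2 = π * ((k.val : ℝ) - ℓ.val) / n := by
    rw [hA, hB]; ring
  rw [hnorm, aux_trig, harg]
  have hite := Fin.coe_int_sub_eq_ite k ℓ
  by_cases hle : ℓ ≤ k
  · rw [if_pos hle] at hite
    have hv : (((k - ℓ : Fin n).val : ℝ)) = (k.val : ℝ) - ℓ.val := by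
      exact_mod_cast congrArg (fun z : ℤ => (z : ℝ)) hite
    rw [hv]
  · rw [if_neg hle] at hite
    have hv : (((k - ℓ : Fin n).val : ℝ)) = (k.val : ℝ) - ℓ.val + n := by
      exact_mod_cast congrArg (fun z : ℤ => (z : ℝ)) hite
    rw [hv, aux_sin_sq_shift _ hn]


set_option maxHeartbeats 1000000 in
/-- For every `a > 0` there exist constants `c₁, C₁ > 0` and `N` such that
for all `n ≥ N` and all `S ≥ a·n`,
`c₁ n³/S² ≤ Σ_{k ≠ ℓ} 1/(1 + S²‖x_k − x_ℓ‖²) ≤ C₁ n³/S²`,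
the sum over all ordered pairs of distinct indices of points of the discrete circle. -/
theorem stmt1 (a : ℝ) (ha : 0 < a) :
    ∃ c₁ C₁ : ℝ, 0 < c₁ ∧ 0 < C₁ ∧ ∃ N : ℕ, ∀ n : ℕ, N ≤ n →
      ∀ S : ℝ, a * (n : ℝ) ≤ S →
        c₁ * ((n : ℝ) ^ 3 / S ^ 2) ≤
          (∑ p ∈ Finset.univ.filter (fun p : Fin n × Fin n => p.1 ≠ p.2),
            (1 + S ^ 2 * ‖circlePt n p.1 - circlePt n p.2‖ ^ 2)⁻¹) ∧
        (∑ p ∈ Finset.univ.filter (fun p : Fin n × Fin n => p.1 ≠ p.2),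
            (1 + S ^ 2 * ‖circlePt n p.1 - circlePt n p.2‖ ^ 2)⁻¹) ≤
          C₁ * ((n : ℝ) ^ 3 / S ^ 2) := by
  have hpi : (0:ℝ) < π := Real.pi_pos
  refine ⟨(a⁻¹ ^ 2 + 4 * π ^ 2)⁻¹, 1, by positivity, one_pos, 3, ?_⟩
  intro n hn S hS
  haveI : NeZero n := ⟨by omega⟩
  have hn0 : (0:ℝ) < n := by exact_mod_cast Nat.pos_of_ne_zero (by omega)
  have hnR : (n:ℝ) ≠ 0 := ne_of_gt hn0
  have hS0 : (0:ℝ) < S := lt_of_lt_of_le (by positivity) hS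
  set h : Fin n → ℝ := fun d => (1 + S ^ 2 * (4 * Real.sin (π * (d.val : ℝ) / n) ^ 2))⁻¹
    with hh
  have hpos : ∀ d : Fin n, 0 ≤ h d := fun d => by
    rw [hh]; positivity
  -- rewrite the sum
  have hsum : (∑ p ∈ Finset.univ.filter (fun p : Fin n × Fin n => p.1 ≠ p.2),
        (1 + S ^ 2 * ‖circlePt n p.1 - circlePt n p.2‖ ^ 2)⁻¹)
      = (n : ℝ) * ∑ d ∈ Finset.univ.filter (fun d : Fin n => d ≠ 0), h d := by
    calc (∑ p ∈ Finset.univ.filter (fun p : Fin n × Fin n => p.1 ≠ p.2),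
          (1 + S ^ 2 * ‖circlePt n p.1 - circlePt n p.2‖ ^ 2)⁻¹)
        = ∑ p ∈ Finset.univ.filter (fun p : Fin n × Fin n => p.1 ≠ p.2),
            h (p.1 - p.2) := by
          refine Finset.sum_congr rfl fun p _ => ?_
          rw [hh, aux_norm_circlePt]
      _ = ∑ p : Fin n × Fin n, if p.1 ≠ p.2 then h (p.1 - p.2) else 0 := by
          rw [Finset.sum_filter]
      _ = ∑ k : Fin n, ∑ ℓ : Fin n, (if k ≠ ℓ then h (k - ℓ) else 0) := by
          rw [Fintype.sum_prod_type]
      _ = ∑ k : Fin n, ∑ d : Fin n, (if d ≠ 0 then h d else 0) := by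
          refine Finset.sum_congr rfl fun k _ => ?_
          rw [← (Equiv.subLeft k).sum_comp (fun ℓ => if k ≠ ℓ then h (k - ℓ) else 0)]
          refine Finset.sum_congr rfl fun d _ => ?_
          simp only [Equiv.subLeft_apply, sub_sub_cancel]
          have hcond : (k = k - d) ↔ (d = 0) := by rw [eq_comm, sub_eq_self]
          exact if_congr (not_congr hcond) rfl rfl
      _ = (n : ℝ) * ∑ d ∈ Finset.univ.filter (fun d : Fin n => d ≠ 0), h d := by
          simp_rw [← Finset.sum_filter]
          rw [Finset.sum_const, Finset.card_univ, Fintype.card_fin, nsmul_eq_mul]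
  rw [hsum]
  constructor
  · -- LOWER BOUND
    have h1v : ((1 : Fin n)).val = 1 := by
      have : ((1 : Fin n)).val = 1 % n := rfl
      rw [this, Nat.mod_eq_of_lt (by omega)]
    have h1mem : (1 : Fin n) ∈ Finset.univ.filter (fun d : Fin n => d ≠ 0) := by
      rw [Finset.mem_filter]
      refine ⟨Finset.mem_univ _, ?_⟩
      intro h0
      have := congrArg Fin.val h0
      rw [h1v, Fin.val_zero] at this
      omega
    have hCge : h 1 ≤ ∑ d ∈ Finset.univ.filter (fun d : Fin n => d ≠ 0), h d :=
      Finset.single_le_sum (fun d _ => hpos d) h1mem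
    have hsin1 : Real.sin (π * ((1:ℝ)) / n) ^ 2 ≤ π ^ 2 / n ^ 2 := by
      have h1 : (0:ℝ) ≤ π * 1 / n := by positivity
      have h2 : Real.sin (π * 1 / n) ≤ π * 1 / n := Real.sin_le h1
      have hn1 : (1:ℝ) ≤ n := by exact_mod_cast (by omega : 1 ≤ n)
      have h3 : 0 ≤ Real.sin (π * 1 / n) := by
        apply Real.sin_nonneg_of_nonneg_of_le_pi h1
        rw [div_le_iff₀ hn0]
        nlinarith
      calc Real.sin (π * 1 / n) ^ 2 ≤ (π * 1 / n) ^ 2 := by nlinarith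
        _ = π ^ 2 / n ^ 2 := by ring
    have hSsq : a ^ 2 * n ^ 2 ≤ S ^ 2 := by nlinarith [mul_self_le_mul_self (by positivity : (0:ℝ) ≤ a * n) hS]
    have hone : 1 ≤ S ^ 2 / n ^ 2 * a⁻¹ ^ 2 := by
      rw [show S ^ 2 / (n:ℝ) ^ 2 * a⁻¹ ^ 2 = S ^ 2 / (n ^ 2 * a ^ 2) by
        field_simp]
      rw [le_div_iff₀ (by positivity)]
      nlinarith
    have hkey : (a⁻¹ ^ 2 + 4 * π ^ 2)⁻¹ * ((n:ℝ) ^ 2 / S ^ 2) ≤ h 1 := by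
      rw [hh]
      have hXle : 1 + S ^ 2 * (4 * Real.sin (π * (((1:Fin n)).val : ℝ) / n) ^ 2)
          ≤ S ^ 2 / n ^ 2 * (a⁻¹ ^ 2 + 4 * π ^ 2) := by
        rw [h1v]
        push_cast
        have : S ^ 2 * (4 * Real.sin (π * (1:ℝ) / n) ^ 2) ≤ S ^ 2 * (4 * (π ^ 2 / n ^ 2)) := by
          apply mul_le_mul_of_nonneg_left (by linarith [hsin1]) (by positivity)
        calc 1 + S ^ 2 * (4 * Real.sin (π * (1:ℝ) / n) ^ 2)
            ≤ S ^ 2 / n ^ 2 * a⁻¹ ^ 2 + S ^ 2 * (4 * (π ^ 2 / n ^ 2)) := by linarith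
          _ = S ^ 2 / n ^ 2 * (a⁻¹ ^ 2 + 4 * π ^ 2) := by ring
      have hinv := inv_anti₀ (show (0:ℝ) < 1 + S ^ 2 *
          (4 * Real.sin (π * (((1:Fin n)).val : ℝ) / n) ^ 2) by positivity) hXle
      have heq : (S ^ 2 / n ^ 2 * (a⁻¹ ^ 2 + 4 * π ^ 2))⁻¹
          = (a⁻¹ ^ 2 + 4 * π ^ 2)⁻¹ * ((n:ℝ) ^ 2 / S ^ 2) := by
        rw [mul_inv, inv_div]
        ring
      rw [heq] at hinv
      exact hinv
    calc (a⁻¹ ^ 2 + 4 * π ^ 2)⁻¹ * ((n:ℝ) ^ 3 / S ^ 2)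
        = (n:ℝ) * ((a⁻¹ ^ 2 + 4 * π ^ 2)⁻¹ * ((n:ℝ) ^ 2 / S ^ 2)) := by ring
      _ ≤ (n:ℝ) * h 1 := by
          apply mul_le_mul_of_nonneg_left hkey (le_of_lt hn0)
      _ ≤ (n:ℝ) * ∑ d ∈ Finset.univ.filter (fun d : Fin n => d ≠ 0), h d := by
          apply mul_le_mul_of_nonneg_left hCge (le_of_lt hn0)
  · -- UPPER BOUND
    rw [one_mul]
    set B : Fin n → ℝ := fun d => (n:ℝ) ^ 2 / (16 * S ^ 2) *
      ((((d.val : ℝ)) ^ 2)⁻¹ + (((n - d.val : ℕ) : ℝ) ^ 2)⁻¹) with hB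
    have hBpos : ∀ d : Fin n, 0 ≤ B d := fun d => by rw [hB]; positivity
    have hterm : ∀ d ∈ Finset.univ.filter (fun d : Fin n => d ≠ 0), h d ≤ B d := by
      intro d hd
      have hd0 : d ≠ 0 := (Finset.mem_filter.mp hd).2
      have hm1 : 1 ≤ d.val := by
        rcases Nat.eq_zero_or_pos d.val with hv | hv
        · exact absurd (Fin.ext (by simp [hv])) hd0
        · exact hv
      have hmn : d.val < n := d.isLt
      set m := d.val with hm
      set m' := min m (n - m) with hm'
      have hm'1 : 1 ≤ m' := by omega
      have hm'2 : 2 * m' ≤ n := by omega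
      have hm'R : (0:ℝ) < (m' : ℝ) := by exact_mod_cast hm'1
      have hcast : ((n - m : ℕ) : ℝ) = (n:ℝ) - m := by
        rw [Nat.cast_sub (le_of_lt hmn)]
      have hsineq : Real.sin (π * (m:ℝ) / n) = Real.sin (π * (m':ℝ) / n) := by
        rcases le_or_gt m (n - m) with hc | hc
        · have hmm : m' = m := by omega
          rw [hmm]
        · have hmm : m' = n - m := by omega
          have harg : π * ((n - m : ℕ) : ℝ) / n = π - π * (m:ℝ) / n := by
            rw [hcast]; field_simp
          rw [hmm, harg, Real.sin_pi_sub]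
      have hsinlow : 2 * (m':ℝ) / n ≤ Real.sin (π * (m:ℝ) / n) := by
        rw [hsineq]
        have h1 : (0:ℝ) ≤ π * (m':ℝ) / n := by positivity
        have h2 : π * (m':ℝ) / n ≤ π / 2 := by
          rw [div_le_div_iff₀ hn0 two_pos]
          have hc2 : ((2 * m' : ℕ) : ℝ) ≤ (n:ℝ) := by exact_mod_cast hm'2
          push_cast at hc2
          nlinarith
        have hms := Real.mul_le_sin h1 h2
        calc 2 * (m':ℝ) / n = 2 / π * (π * (m':ℝ) / n) := by
              field_simp
          _ ≤ Real.sin (π * (m':ℝ) / n) := hms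
      have hsp : (0:ℝ) < 2 * (m':ℝ) / n := by positivity
      have hY : 16 * S ^ 2 * (m':ℝ) ^ 2 / (n:ℝ) ^ 2
          ≤ 1 + S ^ 2 * (4 * Real.sin (π * (m:ℝ) / n) ^ 2) := by
        have hsq : (2 * (m':ℝ) / n) ^ 2 ≤ Real.sin (π * (m:ℝ) / n) ^ 2 :=
          pow_le_pow_left₀ (le_of_lt hsp) hsinlow 2
        have hmul : S ^ 2 * (4 * (2 * (m':ℝ) / n) ^ 2)
            ≤ S ^ 2 * (4 * Real.sin (π * (m:ℝ) / n) ^ 2) := by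
          apply mul_le_mul_of_nonneg_left (by linarith) (by positivity)
        calc 16 * S ^ 2 * (m':ℝ) ^ 2 / (n:ℝ) ^ 2
            = S ^ 2 * (4 * (2 * (m':ℝ) / n) ^ 2) := by field_simp; ring
          _ ≤ S ^ 2 * (4 * Real.sin (π * (m:ℝ) / n) ^ 2) := hmul
          _ ≤ 1 + S ^ 2 * (4 * Real.sin (π * (m:ℝ) / n) ^ 2) := by linarith
      have hhd : h d ≤ (16 * S ^ 2 * (m':ℝ) ^ 2 / (n:ℝ) ^ 2)⁻¹ := by
        rw [hh]
        exact inv_anti₀ (by positivity) hY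
      have hm'cases : (((m':ℝ)) ^ 2)⁻¹ ≤ (((m:ℝ)) ^ 2)⁻¹ + (((n - m : ℕ) : ℝ) ^ 2)⁻¹ := by
        have hnm1 : 1 ≤ n - m := by omega
        have hnmR : (0:ℝ) < ((n - m : ℕ) : ℝ) := by exact_mod_cast hnm1
        rcases le_or_gt m (n - m) with hc | hc
        · have hmm : m' = m := by omega
          rw [hmm]
          have : (0:ℝ) ≤ (((n - m : ℕ) : ℝ) ^ 2)⁻¹ := by positivity
          linarith
        · have hmm : m' = n - m := by omega
          rw [hmm]
          have hmR : (0:ℝ) < (m:ℝ) := by exact_mod_cast hm1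
          have : (0:ℝ) ≤ (((m:ℝ)) ^ 2)⁻¹ := by positivity
          linarith
      calc h d ≤ (16 * S ^ 2 * (m':ℝ) ^ 2 / (n:ℝ) ^ 2)⁻¹ := hhd
        _ = (n:ℝ) ^ 2 / (16 * S ^ 2) * (((m':ℝ)) ^ 2)⁻¹ := by
            field_simp
        _ ≤ B d := by
            rw [hB]
            exact mul_le_mul_of_nonneg_left hm'cases (by positivity)
    have hstep : ∑ d ∈ Finset.univ.filter (fun d : Fin n => d ≠ 0), h d
        ≤ ∑ d : Fin n, B d :=
      le_trans (Finset.sum_le_sum hterm)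
        (Finset.sum_le_sum_of_subset_of_nonneg (Finset.filter_subset _ _)
          (fun i _ _ => hBpos i))
    have hs1 : ∑ d : Fin n, (((d.val : ℝ)) ^ 2)⁻¹ ≤ 2 := by
      rw [Fin.sum_univ_eq_sum_range (fun m => (((m : ℝ)) ^ 2)⁻¹)]
      obtain ⟨M, hM⟩ : ∃ M, n = M + 1 := ⟨n - 1, by omega⟩
      rw [hM, Finset.sum_range_succ']
      have hz : (((0:ℕ) : ℝ) ^ 2)⁻¹ = 0 := by norm_num
      rw [hz, add_zero]
      have haux := aux_sum_inv_sq M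
      have hle : ∑ i ∈ Finset.range M, ((((i + 1 : ℕ)) : ℝ) ^ 2)⁻¹
          ≤ 2 - 2 * ((M:ℝ) + 1)⁻¹ := by
        calc ∑ i ∈ Finset.range M, ((((i + 1 : ℕ)) : ℝ) ^ 2)⁻¹
            = ∑ i ∈ Finset.range M, (((i : ℝ) + 1) ^ 2)⁻¹ := by
              refine Finset.sum_congr rfl fun i _ => ?_
              push_cast; ring_nf
          _ ≤ 2 - 2 * ((M:ℝ) + 1)⁻¹ := haux
      have hinv : (0:ℝ) ≤ 2 * ((M:ℝ) + 1)⁻¹ := by positivity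
      linarith
    have hs2 : ∑ d : Fin n, ((((n - d.val : ℕ)) : ℝ) ^ 2)⁻¹ ≤ 2 := by
      rw [Fin.sum_univ_eq_sum_range (fun m => ((((n - m : ℕ)) : ℝ) ^ 2)⁻¹)]
      have hrefl := Finset.sum_range_reflect (fun j => ((((j + 1 : ℕ)) : ℝ) ^ 2)⁻¹) n
      have heqs : ∑ j ∈ Finset.range n, ((((n - j : ℕ)) : ℝ) ^ 2)⁻¹
          = ∑ j ∈ Finset.range n, ((((j + 1 : ℕ)) : ℝ) ^ 2)⁻¹ := by
        rw [← hrefl]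
        refine Finset.sum_congr rfl fun j hj => ?_
        have hj' : n - 1 - j + 1 = n - j := by
          have := Finset.mem_range.mp hj; omega
        rw [hj']
      rw [heqs]
      have haux := aux_sum_inv_sq n
      have hinv : (0:ℝ) ≤ 2 * ((n:ℝ) + 1)⁻¹ := by positivity
      calc ∑ j ∈ Finset.range n, ((((j + 1 : ℕ)) : ℝ) ^ 2)⁻¹
          = ∑ j ∈ Finset.range n, (((j : ℝ) + 1) ^ 2)⁻¹ := by
            refine Finset.sum_congr rfl fun j _ => ?_
            push_cast; ring_nf
        _ ≤ 2 - 2 * ((n:ℝ) + 1)⁻¹ := haux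
        _ ≤ 2 := by linarith
    have hsumB : ∑ d : Fin n, B d ≤ (n:ℝ) ^ 2 / (4 * S ^ 2) := by
      have : ∑ d : Fin n, B d = (n:ℝ) ^ 2 / (16 * S ^ 2) *
          ((∑ d : Fin n, (((d.val : ℝ)) ^ 2)⁻¹)
            + ∑ d : Fin n, ((((n - d.val : ℕ)) : ℝ) ^ 2)⁻¹) := by
        rw [hB, ← Finset.mul_sum, Finset.sum_add_distrib]
      rw [this]
      calc (n:ℝ) ^ 2 / (16 * S ^ 2) *
          ((∑ d : Fin n, (((d.val : ℝ)) ^ 2)⁻¹)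
            + ∑ d : Fin n, ((((n - d.val : ℕ)) : ℝ) ^ 2)⁻¹)
          ≤ (n:ℝ) ^ 2 / (16 * S ^ 2) * 4 := by
            apply mul_le_mul_of_nonneg_left (by linarith) (by positivity)
        _ = (n:ℝ) ^ 2 / (4 * S ^ 2) := by field_simp; ring
    calc (n:ℝ) * ∑ d ∈ Finset.univ.filter (fun d : Fin n => d ≠ 0), h d
        ≤ (n:ℝ) * ((n:ℝ) ^ 2 / (4 * S ^ 2)) := by
          apply mul_le_mul_of_nonneg_left (le_trans hstep hsumB) (le_of_lt hn0)
      _ ≤ (n:ℝ) ^ 3 / S ^ 2 := by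
          rw [show (n:ℝ) * ((n:ℝ) ^ 2 / (4 * S ^ 2)) = (n:ℝ) ^ 3 / (4 * S ^ 2) by ring,
            div_le_div_iff₀ (by positivity) (by positivity)]
          nlinarith [pow_pos hn0 3, sq_nonneg S, pow_pos hS0 2]
end
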